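/- There is a constant C such that for every self-feeding circuit of size n, depth d, and with m edges, there exists a BNL-program that is asynchronously equivalent to the circuit, has size at most C·(n+m), and has computation delay at most C·(d+1) relative to the circuit; moreover, if the circuit has bounded fan-in, the program can be taken to have size at most C·n. -/

import Mathlib

/-! ### Boolean network logic (BNL) -/

/-- Formulas of Boolean network logic (BNL), over schema variables indexed by `ℕ`. -/
inductive BForm where
  | tru : BForm
  | var : ℕ → BForm
  | not : BForm → BForm
  | and : BForm → BForm → BForm

namespace BForm

/-- Truth value of a BNL-formula under a valuation of the schema variables. -/
def eval (g : ℕ → Bool) : BForm → Bool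
  | tru => true
  | var x => g x
  | not φ => !(eval g φ)
  | and φ ψ => eval g φ && eval g ψ

/-- Number of occurrences of `⊤`, variables, `¬` and `∧`. -/
def size : BForm → ℕ
  | tru => 1
  | var _ => 1
  | not φ => size φ + 1
  | and φ ψ => size φ + size ψ + 1

/-- Connective-nesting depth. -/
def depth : BForm → ℕ
  | tru => 0
  | var _ => 0
  | not φ => depth φ + 1
  | and φ ψ => max (depth φ) (depth ψ) + 1

/-- The set of schema variables occurring in a formula. -/
def vars : BForm → Finset ℕ
  | tru => ∅
  | var x => {x}
  | not φ => vars φ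
  | and φ ψ => vars φ ∪ vars ψ

end BForm

/-- A BNL-program over the finite set `T` of schema variables (linearly ordered as natural
numbers), with input predicates `I`, terminal values `term` (relevant on `T \ I`), iteration
clause bodies `iter` (relevant on `T`), print predicates `Pr` and attention predicates `At`. -/
structure BNL where
  T : Finset ℕ
  I : Finset ℕ
  hIT : I ⊆ T
  term : ℕ → Bool
  iter : ℕ → BForm
  hiter : ∀ X ∈ T, (iter X).vars ⊆ T
  Pr : Finset ℕ
  hPr : Pr ⊆ T
  At : Finset ℕ
  hAt : At ⊆ T

/-- The valuation of the elements of a finite set `I ⊆ ℕ` induced by the bit string `u`,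
via the increasing enumeration of `I`. -/
def inputVal (I : Finset ℕ) (u : ℕ → Bool) (X : ℕ) : Bool :=
  u ((I.sort (· ≤ ·)).idxOf X)

namespace BNL

/-- The global configuration of a BNL-program at round `t` on input bit string `u`. -/
def conf (Λ : BNL) (u : ℕ → Bool) : ℕ → ℕ → Bool
  | 0 => fun X => if X ∈ Λ.I then inputVal Λ.I u X else Λ.term X
  | t + 1 => fun X => (Λ.iter X).eval (Λ.conf u t)

/-- The global configuration string at round `t`: the values on `T` in increasing order. -/
def confStr (Λ : BNL) (u : ℕ → Bool) (t : ℕ) : List Bool :=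
  (Λ.T.sort (· ≤ ·)).map (Λ.conf u t)

/-- Round `t` is an output round iff some attention predicate is true at round `t`. -/
def attn (Λ : BNL) (u : ℕ → Bool) (t : ℕ) : Prop :=
  ∃ X ∈ Λ.At, Λ.conf u t X = true

/-- The print string at round `t`: the values of the print predicates in increasing order. -/
def out (Λ : BNL) (u : ℕ → Bool) (t : ℕ) : List Bool :=
  (Λ.Pr.sort (· ≤ ·)).map (Λ.conf u t)

/-- The size of a BNL-program: the total number of occurrences of `⊤`, variables, `¬`
and `∧` in its terminal and iteration clauses. -/
def size (Λ : BNL) : ℕ :=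
  (Λ.T \ Λ.I).card + ∑ X ∈ Λ.T, (Λ.iter X).size

/-- The depth of a BNL-program: the maximum depth of the bodies of its iteration clauses. -/
def depth (Λ : BNL) : ℕ :=
  Λ.T.sup fun X => (Λ.iter X).depth

/-- Pointwise transient time: the least `t` such that `g_t = g_{t+c}` on `T` for some `c ≥ 1`. -/
noncomputable def transientAt (Λ : BNL) (u : ℕ → Bool) : ℕ :=
  sInf {t | ∃ c, 1 ≤ c ∧ ∀ X ∈ Λ.T, Λ.conf u (t + c) X = Λ.conf u t X}

/-- The transient time of a program: the maximum of its pointwise transient times. -/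
def HasTransientTime (Λ : BNL) (n : ℕ) : Prop :=
  (∀ u, Λ.transientAt u ≤ n) ∧ ∃ u, Λ.transientAt u = n

end BNL

/-- An abstract machine producing, for each input bit string, a global configuration string,
an attention condition, and a print string at every round. -/
structure Machine where
  ins : ℕ
  prints : ℕ
  conf : (ℕ → Bool) → ℕ → List Bool
  attn : (ℕ → Bool) → ℕ → Prop
  out : (ℕ → Bool) → ℕ → List Bool

/-- The output rounds of a machine on a given input, as an ordered subtype of `ℕ`. -/
abbrev Machine.Rounds (M : Machine) (u : ℕ → Bool) := {t : ℕ // M.attn u t}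

/-- The machine determined by a BNL-program. -/
def BNL.toM (Λ : BNL) : Machine :=
  ⟨Λ.I.card, Λ.Pr.card, Λ.confStr, Λ.attn, Λ.out⟩

/-- Asynchronous equivalence: equally many input and print positions and, on every input,
an order isomorphism between the output rounds under which the outputs agree. -/
def AsyncEquiv (M₁ M₂ : Machine) : Prop :=
  M₁.ins = M₂.ins ∧ M₁.prints = M₂.prints ∧
  ∀ u : ℕ → Bool, ∃ e : M₁.Rounds u ≃o M₂.Rounds u,
    ∀ t : M₁.Rounds u, M₁.out u t.val = M₂.out u (e t).val

/-- Global equivalence: asynchronous equivalence together with identical global configuration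
sequences and identical output rounds on every input. -/
def GlobalEquiv (M₁ M₂ : Machine) : Prop :=
  AsyncEquiv M₁ M₂ ∧ ∀ u t, M₁.conf u t = M₂.conf u t ∧ (M₁.attn u t ↔ M₂.attn u t)

/-- `M₁` is asynchronously equivalent to `M₂` with computation delay at most `D`:
matched output rounds `x` of `M₁` and `y` of `M₂` satisfy `y ≤ x` and `x ≤ D·y`. -/
def EquivWithDelay (M₁ M₂ : Machine) (D : ℕ) : Prop :=
  M₁.ins = M₂.ins ∧ M₁.prints = M₂.prints ∧
  ∀ u : ℕ → Bool, ∃ e : M₁.Rounds u ≃o M₂.Rounds u,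
    (∀ t : M₁.Rounds u, M₁.out u t.val = M₂.out u (e t).val) ∧
    ∀ t : M₁.Rounds u, (e t).val ≤ t.val ∧ t.val ≤ D * (e t).val

/-! ### Boolean circuits and self-feeding circuits -/

/-- Gate labels: input gates (unlabeled), and `∧`, `∨`, `¬` gates. -/
inductive GateLabel where
  | inp : GateLabel
  | and : GateLabel
  | or : GateLabel
  | not : GateLabel
deriving DecidableEq

/-- A Boolean circuit: a finite DAG (presented in topological order) whose non-input
gates are labeled `∧`, `∨`, `¬`; `¬`-gates have in-degree 1, input gates in-degree 0.
Input gates and output gates (gates of out-degree 0) are linearly ordered by lists. -/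
structure Circuit where
  size : ℕ
  label : Fin size → GateLabel
  /-- `edge j g` means gate `j` feeds into gate `g`; edges respect the topological
  order of the indices, so the graph is acyclic. -/
  edge : Fin size → Fin size → Bool
  topo : ∀ j g, edge j g = true → j < g
  inputs : List (Fin size)
  outputs : List (Fin size)
  inputs_nodup : inputs.Nodup
  outputs_nodup : outputs.Nodup
  inputs_spec : ∀ g, g ∈ inputs ↔ label g = GateLabel.inp
  inp_no_pred : ∀ g, label g = GateLabel.inp → ∀ j, edge j g = false
  not_fanin : ∀ g, label g = GateLabel.not →
    (Finset.univ.filter fun j => edge j g = true).card = 1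
  outputs_spec : ∀ g, g ∈ outputs ↔ ∀ j, edge g j = false

namespace Circuit

/-- Iterated evaluation: `evAux x n` computes the correct gate values for all gates of
index `< n`; `∧`/`∨`-gates of in-degree 0 output `1`/`0` respectively. -/
def evAux (C : Circuit) (x : ℕ → Bool) : ℕ → Fin C.size → Bool
  | 0, _ => false
  | n + 1, g =>
    match C.label g with
    | .inp => x (C.inputs.idxOf g)
    | .and => decide (∀ j, C.edge j g = true → C.evAux x n j = true)
    | .or => decide (∃ j, C.edge j g = true ∧ C.evAux x n j = true)
    | .not => decide (∀ j, C.edge j g = true → C.evAux x n j = false)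

/-- The value of gate `g` on input `x` (the `m`-th input gate receives bit `x m`). -/
def eval (C : Circuit) (x : ℕ → Bool) (g : Fin C.size) : Bool :=
  C.evAux x (C.size + 1) g

/-- Iterated height computation. -/
def hAux (C : Circuit) : ℕ → Fin C.size → ℕ
  | 0, _ => 0
  | n + 1, g => (Finset.univ.filter fun j => C.edge j g = true).sup fun j => C.hAux n j + 1

/-- The height of a gate: the length of the longest directed path ending at it. -/
def height (C : Circuit) (g : Fin C.size) : ℕ := C.hAux C.size g

/-- The depth of a circuit: the length of the longest directed path from a gate of
in-degree 0 to an output gate. -/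
def depth (C : Circuit) : ℕ := (C.outputs.map C.height).foldr max 0

/-- The number of edges of a circuit. -/
def edgeCount (C : Circuit) : ℕ :=
  ((Finset.univ ×ˢ Finset.univ).filter
    fun e : Fin C.size × Fin C.size => C.edge e.1 e.2 = true).card

/-- Bounded fan-in: every `∧`-gate and `∨`-gate has in-degree at most 2. -/
def BoundedFanIn (C : Circuit) : Prop :=
  ∀ g, (C.label g = GateLabel.and ∨ C.label g = GateLabel.or) →
    (Finset.univ.filter fun j => C.edge j g = true).card ≤ 2

end Circuit

/-- A self-feeding circuit for `k`: a circuit with `k` input and `k` output gates, with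
input positions `Ipos`, an initializing function `init` (relevant outside `Ipos`), print
positions `Ppos` and attention positions `Apos`. -/
structure SelfFeeding (k : ℕ) extends Circuit where
  in_len : inputs.length = k
  out_len : outputs.length = k
  Ipos : Finset (Fin k)
  init : Fin k → Bool
  Ppos : Finset (Fin k)
  Apos : Finset (Fin k)

namespace SelfFeeding

/-- The configuration sequence of a self-feeding circuit on input `u` (bits assigned to
the input positions in increasing order): the circuit's output string is fed back in. -/
def conf {k : ℕ} (C : SelfFeeding k) (u : ℕ → Bool) : ℕ → Fin k → Bool
  | 0 => fun v => if v ∈ C.Ipos then u ((C.Ipos.sort (· ≤ ·)).idxOf v) else C.init v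
  | n + 1 => fun v =>
      C.toCircuit.eval (fun m => if h : m < k then C.conf u n ⟨m, h⟩ else false)
        (C.toCircuit.outputs.get (Fin.cast C.out_len.symm v))

/-- Round `t` is an output round iff some attention position holds `1`. -/
def attn {k : ℕ} (C : SelfFeeding k) (u : ℕ → Bool) (t : ℕ) : Prop :=
  ∃ v ∈ C.Apos, C.conf u t v = true

/-- The print string at round `t`. -/
def out {k : ℕ} (C : SelfFeeding k) (u : ℕ → Bool) (t : ℕ) : List Bool :=
  (C.Ppos.sort (· ≤ ·)).map (C.conf u t)

/-- The machine determined by a self-feeding circuit. -/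
def toM {k : ℕ} (C : SelfFeeding k) : Machine :=
  ⟨C.Ipos.card, C.Ppos.card, fun u t => List.ofFn (C.conf u t), C.attn, C.out⟩

end SelfFeeding

/-! ### Auxiliary development for the proof -/

namespace SFBNL

/-! #### Arithmetic helpers -/

lemma succ_mod (p t : ℕ) (hp : 0 < p) :
    (t + 1) % p = if t % p = p - 1 then 0 else t % p + 1 := by
  have hr : t % p < p := Nat.mod_lt _ hp
  have h1 : (t + 1) % p = (t % p + 1) % p := by
    conv_lhs => rw [← Nat.div_add_mod t p]
    rw [Nat.add_assoc, Nat.mul_add_mod]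
  by_cases h : t % p = p - 1
  · rw [h1, h, if_pos rfl]
    have h2 : p - 1 + 1 = p := by omega
    rw [h2, Nat.mod_self]
  · rw [h1, if_neg h, Nat.mod_eq_of_lt (by omega)]

lemma div_eq_exact (p a q : ℕ) (hp : 0 < p) (h1 : p * q ≤ a) (h2 : a < p * (q + 1)) :
    a / p = q := by
  have hq : p * (q + 1) = p * q + p := by ring
  obtain ⟨r, hr, hra⟩ : ∃ r, r < p ∧ a = p * q + r := ⟨a - p * q, by omega, by omega⟩
  subst hra
  rw [Nat.mul_add_div hp, Nat.div_eq_of_lt hr]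
  omega

lemma succ_div_of_mod_eq {p t : ℕ} (hp : 0 < p) (h : t % p = p - 1) :
    (t + 1) / p = t / p + 1 := by
  have h0 := Nat.div_add_mod t p
  have hr : t % p < p := Nat.mod_lt _ hp
  apply div_eq_exact p _ _ hp
  · have : p * (t / p + 1) = p * (t / p) + p := by ring
    omega
  · have : p * (t / p + 1 + 1) = p * (t / p) + 2 * p := by ring
    omega

lemma succ_div_of_mod_ne {p t : ℕ} (hp : 0 < p) (h : t % p ≠ p - 1) :
    (t + 1) / p = t / p := by
  have h0 := Nat.div_add_mod t p
  have hr : t % p < p := Nat.mod_lt _ hp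
  apply div_eq_exact p _ _ hp
  · omega
  · have : p * (t / p + 1) = p * (t / p) + p := by ring
    omega

lemma dvd_succ_iff {p t : ℕ} (hp : 0 < p) : p ∣ (t + 1) ↔ t % p = p - 1 := by
  rw [Nat.dvd_iff_mod_eq_zero, succ_mod p t hp]
  by_cases h : t % p = p - 1
  · simp [h]
  · simp [h]

lemma pred_div_eq_of_ge {p t : ℕ} (hp : 0 < p) (h : p * (t / p) + 1 ≤ t) :
    (t - 1) / p = t / p := by
  have h0 := Nat.div_add_mod t p
  have hr : t % p < p := Nat.mod_lt _ hp
  apply div_eq_exact p _ _ hp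
  · omega
  · have : p * (t / p + 1) = p * (t / p) + p := by ring
    omega

/-! #### BForm helpers -/

def orF (a b : BForm) : BForm := .not (.and (.not a) (.not b))

lemma eval_orF (g : ℕ → Bool) (a b : BForm) :
    (orF a b).eval g = (a.eval g || b.eval g) := by
  cases h1 : a.eval g <;> cases h2 : b.eval g <;> simp [orF, BForm.eval, h1, h2]

lemma size_orF (a b : BForm) : (orF a b).size = a.size + b.size + 4 := by
  simp only [orF, BForm.size]; omega

lemma vars_orF (a b : BForm) : (orF a b).vars = a.vars ∪ b.vars := rfl

def bigAnd (l : List ℕ) : BForm := l.foldr (fun j acc => .and (.var j) acc) .tru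

def bigAndN (l : List ℕ) : BForm := l.foldr (fun j acc => .and (.not (.var j)) acc) .tru

lemma eval_bigAnd (g : ℕ → Bool) (l : List ℕ) :
    (bigAnd l).eval g = true ↔ ∀ j ∈ l, g j = true := by
  induction l with
  | nil => simp [bigAnd, BForm.eval]
  | cons a l ih =>
    simp only [bigAnd] at ih ⊢
    simp [BForm.eval, ih]

lemma eval_bigAndN (g : ℕ → Bool) (l : List ℕ) :
    (bigAndN l).eval g = true ↔ ∀ j ∈ l, g j = false := by
  induction l with
  | nil => simp [bigAndN, BForm.eval]
  | cons a l ih =>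
    simp only [bigAndN] at ih ⊢
    simp [BForm.eval, ih]

lemma size_bigAnd (l : List ℕ) : (bigAnd l).size = 2 * l.length + 1 := by
  induction l with
  | nil => rfl
  | cons a l ih => simp [bigAnd, BForm.size] at ih ⊢; omega

lemma size_bigAndN (l : List ℕ) : (bigAndN l).size = 3 * l.length + 1 := by
  induction l with
  | nil => rfl
  | cons a l ih => simp [bigAndN, BForm.size] at ih ⊢; omega

lemma vars_bigAnd (l : List ℕ) : (bigAnd l).vars = l.toFinset := by
  induction l with
  | nil => rfl
  | cons a l ih =>
    simp only [bigAnd] at ih ⊢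
    simp only [List.foldr_cons, BForm.vars, List.toFinset_cons]
    rw [ih, ← Finset.insert_eq]

lemma vars_bigAndN (l : List ℕ) : (bigAndN l).vars = l.toFinset := by
  induction l with
  | nil => rfl
  | cons a l ih =>
    simp only [bigAndN] at ih ⊢
    simp only [List.foldr_cons, BForm.vars, List.toFinset_cons]
    rw [ih, ← Finset.insert_eq]

/-! #### Sorting helpers -/

lemma sortMap {k : ℕ} (s : Finset (Fin k)) :
    (s.map ⟨Fin.val, Fin.val_injective⟩).sort (· ≤ ·) = (s.sort (· ≤ ·)).map Fin.val := by
  apply List.Perm.eq_of_pairwise' (Finset.pairwise_sort _ _) ?_ ?_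
  swap
  · rw [← Multiset.coe_eq_coe]
    rw [Finset.sort_eq, Finset.map_val, ← Multiset.map_coe, Finset.sort_eq]
    rfl
  · exact List.Pairwise.map Fin.val (fun a b (h : a ≤ b) => h) (Finset.pairwise_sort s (· ≤ ·))

lemma indexOfMap {k : ℕ} (l : List (Fin k)) (a : Fin k) :
    (l.map Fin.val).idxOf a.val = l.idxOf a := by
  induction l with
  | nil => rfl
  | cons b l ih =>
    simp only [List.map_cons, List.idxOf_cons, ih]
    by_cases h : b = a
    · simp [h]
    · have h2 : b.val ≠ a.val := fun hh => h (Fin.val_injective hh)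
      rw [beq_false_of_ne h2, beq_false_of_ne h]

lemma le_foldr_max (l : List ℕ) (a : ℕ) (h : a ∈ l) : a ≤ l.foldr max 0 := by
  induction l with
  | nil => simp at h
  | cons b l ih =>
    rcases List.mem_cons.1 h with rfl | h
    · exact le_max_left _ _
    · exact le_trans (ih h) (le_max_right _ _)

lemma foldr_max_le (l : List ℕ) (n : ℕ) (h : ∀ a ∈ l, a ≤ n) : l.foldr max 0 ≤ n := by
  induction l with
  | nil => exact Nat.zero_le n
  | cons b l ih =>
    simp only [List.foldr_cons, max_le_iff]
    exact ⟨h b List.mem_cons_self, ih (fun a ha => h a (List.mem_cons_of_mem _ ha))⟩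

end SFBNL

namespace SFBNL

/-! #### Circuit helpers -/

namespace CircuitAux

variable (C : Circuit)

/-- The list of predecessors of a gate. -/
def preds (g : Fin C.size) : List (Fin C.size) :=
  (List.finRange C.size).filter (fun j => decide (C.edge j g = true))

lemma mem_preds {g j : Fin C.size} : j ∈ preds C g ↔ C.edge j g = true := by
  simp [preds, List.mem_filter, List.mem_finRange]

/-- In-degree of a gate. -/
def indeg (g : Fin C.size) : ℕ := (Finset.univ.filter fun j => C.edge j g = true).card

lemma length_preds (g : Fin C.size) : (preds C g).length = indeg C g := by
  rw [indeg, Fin.univ_def]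
  rfl

lemma edgeCount_eq : C.edgeCount = ∑ g : Fin C.size, indeg C g := by
  unfold Circuit.edgeCount indeg
  rw [Finset.card_eq_sum_card_fiberwise (f := Prod.snd) (t := Finset.univ)
    (fun x _ => Finset.mem_univ _)]
  apply Finset.sum_congr rfl
  intro g _
  apply Finset.card_nbij (fun x => x.1)
  · intro x hx
    simp only [Finset.mem_coe, Finset.mem_filter, Finset.mem_univ, true_and, Finset.mem_product] at hx ⊢
    obtain ⟨h1, h2⟩ := hx
    rw [← h2]; exact h1
  · intro x hx y hy hxy
    simp only [Finset.mem_coe, Finset.mem_filter] at hx hy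
    have h1 : x.1 = y.1 := hxy
    have h2 : x.2 = y.2 := by rw [hx.2, hy.2]
    exact Prod.ext h1 h2
  · intro j hj
    simp only [Finset.mem_coe, Finset.mem_filter, Finset.mem_univ, true_and] at hj
    exact ⟨⟨j, g⟩, by simp [hj], rfl⟩

lemma hAux_le (n : ℕ) (g : Fin C.size) : C.hAux n g ≤ n := by
  induction n generalizing g with
  | zero => exact le_refl 0
  | succ n ih =>
    show Finset.sup _ _ ≤ n + 1
    apply Finset.sup_le
    intro j _
    exact Nat.succ_le_succ (ih j)

lemma hAux_stab : ∀ (gn : ℕ) (g : Fin C.size), g.val = gn →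
    ∀ a, g.val < a → C.hAux a g = C.hAux (g.val + 1) g := by
  intro gn
  induction gn using Nat.strong_induction_on with
  | _ gn ih =>
    rintro g rfl a ha
    obtain ⟨a', rfl⟩ : ∃ a', a = a' + 1 := ⟨a - 1, by omega⟩
    show Finset.sup _ _ = Finset.sup _ _
    apply Finset.sup_congr rfl
    intro j hj
    have hedge : C.edge j g = true := by simpa using hj
    have hjg : j.val < g.val := C.topo j g hedge
    congr 1
    rw [ih j.val hjg j rfl a' (by omega), ih j.val hjg j rfl g.val (by omega)]

lemma height_lt_of_edge {j g : Fin C.size} (h : C.edge j g = true) :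
    C.height j < C.height g := by
  have hjg : j.val < g.val := C.topo j g h
  have hg : C.height g = C.hAux (g.val + 1) g :=
    hAux_stab C g.val g rfl C.size g.isLt
  have step : C.hAux (g.val + 1) g =
      (Finset.univ.filter fun j => C.edge j g = true).sup fun j => C.hAux g.val j + 1 := rfl
  have hle : C.hAux g.val j + 1 ≤ C.hAux (g.val + 1) g := by
    rw [step]
    exact Finset.le_sup (f := fun j => C.hAux (g.val) j + 1) (Finset.mem_filter.2 ⟨Finset.mem_univ j, h⟩)
  have hj2 : C.hAux g.val j = C.height j := by
    unfold Circuit.height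
    rw [hAux_stab C j.val j rfl g.val hjg, hAux_stab C j.val j rfl C.size j.isLt]
  omega

lemma height_le_size (g : Fin C.size) : C.height g ≤ C.size := hAux_le C C.size g

lemma height_le_depth {g : Fin C.size} (h : g ∈ C.outputs) : C.height g ≤ C.depth :=
  le_foldr_max _ _ (List.mem_map_of_mem (f := C.height) h)

lemma evAux_stab (x : ℕ → Bool) : ∀ (gn : ℕ) (g : Fin C.size), g.val = gn →
    ∀ a b, g.val < a → g.val < b → C.evAux x a g = C.evAux x b g := by
  intro gn
  induction gn using Nat.strong_induction_on with
  | _ gn ih =>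
    rintro g rfl a b ha hb
    obtain ⟨a', rfl⟩ : ∃ a', a = a' + 1 := ⟨a - 1, by omega⟩
    obtain ⟨b', rfl⟩ : ∃ b', b = b' + 1 := ⟨b - 1, by omega⟩
    have key : ∀ j : Fin C.size, C.edge j g = true → C.evAux x a' j = C.evAux x b' j := by
      intro j hj
      have hjg : j.val < g.val := C.topo j g hj
      exact ih j.val hjg j rfl a' b' (by omega) (by omega)
    cases hl : C.label g <;> simp only [Circuit.evAux, hl]
    · apply decide_eq_decide.mpr
      constructor
      · intro h j hj; rw [← key j hj]; exact h j hj
      · intro h j hj; rw [key j hj]; exact h j hj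
    · apply decide_eq_decide.mpr
      constructor
      · rintro ⟨j, hj, hv⟩; exact ⟨j, hj, (key j hj) ▸ hv⟩
      · rintro ⟨j, hj, hv⟩; exact ⟨j, hj, (key j hj) ▸ hv⟩
    · apply decide_eq_decide.mpr
      constructor
      · intro h j hj; rw [← key j hj]; exact h j hj
      · intro h j hj; rw [key j hj]; exact h j hj

lemma eval_unfold (x : ℕ → Bool) (g : Fin C.size) :
    C.eval x g = match C.label g with
      | .inp => x (C.inputs.idxOf g)
      | .and => decide (∀ j, C.edge j g = true → C.eval x j = true)
      | .or => decide (∃ j, C.edge j g = true ∧ C.eval x j = true)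
      | .not => decide (∀ j, C.edge j g = true → C.eval x j = false) := by
  have key : ∀ j : Fin C.size, C.edge j g = true → C.evAux x C.size j = C.eval x j := by
    intro j hj
    exact evAux_stab C x j.val j rfl C.size (C.size + 1) j.isLt (by omega)
  show C.evAux x (C.size + 1) g = _
  cases hl : C.label g <;> simp only [Circuit.evAux, hl]
  · apply decide_eq_decide.mpr
    constructor
    · intro h j hj; rw [← key j hj]; exact h j hj
    · intro h j hj; rw [key j hj]; exact h j hj
  · apply decide_eq_decide.mpr
    constructor
    · rintro ⟨j, hj, hv⟩; exact ⟨j, hj, (key j hj) ▸ hv⟩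
    · rintro ⟨j, hj, hv⟩; exact ⟨j, hj, (key j hj).symm ▸ hv⟩
  · apply decide_eq_decide.mpr
    constructor
    · intro h j hj; rw [← key j hj]; exact h j hj
    · intro h j hj; rw [key j hj]; exact h j hj

lemma eval_inp (x : ℕ → Bool) {g : Fin C.size} (h : C.label g = GateLabel.inp) :
    C.eval x g = x (C.inputs.idxOf g) := by
  rw [eval_unfold, h]

lemma eval_and (x : ℕ → Bool) {g : Fin C.size} (h : C.label g = GateLabel.and) :
    C.eval x g = decide (∀ j, C.edge j g = true → C.eval x j = true) := by
  rw [eval_unfold, h]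

lemma eval_or (x : ℕ → Bool) {g : Fin C.size} (h : C.label g = GateLabel.or) :
    C.eval x g = decide (∃ j, C.edge j g = true ∧ C.eval x j = true) := by
  rw [eval_unfold, h]

lemma eval_not (x : ℕ → Bool) {g : Fin C.size} (h : C.label g = GateLabel.not) :
    C.eval x g = decide (∀ j, C.edge j g = true → C.eval x j = false) := by
  rw [eval_unfold, h]

lemma outputs_ne_nil (h : 0 < C.size) : C.outputs ≠ [] := by
  intro hnil
  have hg : (⟨C.size - 1, by omega⟩ : Fin C.size) ∈ C.outputs := by
    apply (C.outputs_spec _).2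
    intro j
    by_contra h'
    have h2 : (⟨C.size - 1, by omega⟩ : Fin C.size) < j := C.topo _ j (by simpa using h')
    have h3 : C.size - 1 < j.val := h2
    have := j.isLt
    omega
  rw [hnil] at hg
  exact List.not_mem_nil hg

lemma depth_le_size : C.depth ≤ C.size := by
  apply foldr_max_le
  intro a ha
  rw [List.mem_map] at ha
  obtain ⟨g, _, rfl⟩ := ha
  exact height_le_size C g

lemma indeg_inp {g : Fin C.size} (h : C.label g = GateLabel.inp) : indeg C g = 0 := by
  rw [indeg, Finset.card_eq_zero, Finset.filter_eq_empty_iff]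
  intro j _
  rw [C.inp_no_pred g h j]
  simp

lemma indeg_le_two_of_bfi (hb : C.BoundedFanIn) (g : Fin C.size) : indeg C g ≤ 2 := by
  cases hl : C.label g
  · rw [indeg_inp C hl]; omega
  · exact hb g (Or.inl hl)
  · exact hb g (Or.inr hl)
  · rw [show indeg C g = 1 from C.not_fanin g hl]
    omega

end CircuitAux

end SFBNL

namespace SFBNL

open CircuitAux

section Construction

variable {k : ℕ}

/-- Clock period. -/
def pp (C : SelfFeeding k) : ℕ := C.toCircuit.depth + 2

/-- Index of the `i`-th clock variable. -/
def cv (C : SelfFeeding k) (i : ℕ) : ℕ := 2 * k + C.toCircuit.size + i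

/-- Index of the last clock variable. -/
def cL (C : SelfFeeding k) : ℕ := cv C (pp C - 1)

/-- Total number of variables. -/
def NN (C : SelfFeeding k) : ℕ := 2 * k + C.toCircuit.size + pp C

/-- The output gate feeding position `v`. -/
def outG (C : SelfFeeding k) (v : Fin k) : Fin C.toCircuit.size :=
  C.toCircuit.outputs.get (Fin.cast C.out_len.symm v)

lemma outG_mem (C : SelfFeeding k) (v : Fin k) : outG C v ∈ C.toCircuit.outputs :=
  List.get_mem _ _

/-- The iteration formula for a gate variable. -/
def gateForm (C : SelfFeeding k) (g : Fin C.toCircuit.size) : BForm :=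
  match C.toCircuit.label g with
  | .inp => orF (.var (C.toCircuit.inputs.idxOf g)) (.var (k + C.toCircuit.inputs.idxOf g))
  | .and => bigAnd ((preds C.toCircuit g).map (fun j => 2 * k + j.val))
  | .or => .not (bigAndN ((preds C.toCircuit g).map (fun j => 2 * k + j.val)))
  | .not => bigAndN ((preds C.toCircuit g).map (fun j => 2 * k + j.val))

lemma gateForm_inp (C : SelfFeeding k) {g : Fin C.toCircuit.size}
    (h : C.toCircuit.label g = GateLabel.inp) :
    gateForm C g = orF (.var (C.toCircuit.inputs.idxOf g))
      (.var (k + C.toCircuit.inputs.idxOf g)) := by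
  unfold gateForm; rw [h]

lemma gateForm_and (C : SelfFeeding k) {g : Fin C.toCircuit.size}
    (h : C.toCircuit.label g = GateLabel.and) :
    gateForm C g = bigAnd ((preds C.toCircuit g).map (fun j => 2 * k + j.val)) := by
  unfold gateForm; rw [h]

lemma gateForm_or (C : SelfFeeding k) {g : Fin C.toCircuit.size}
    (h : C.toCircuit.label g = GateLabel.or) :
    gateForm C g = .not (bigAndN ((preds C.toCircuit g).map (fun j => 2 * k + j.val))) := by
  unfold gateForm; rw [h]

lemma gateForm_not (C : SelfFeeding k) {g : Fin C.toCircuit.size}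
    (h : C.toCircuit.label g = GateLabel.not) :
    gateForm C g = bigAndN ((preds C.toCircuit g).map (fun j => 2 * k + j.val)) := by
  unfold gateForm; rw [h]

lemma eval_S_form (g : ℕ → Bool) (a b c d : ℕ) :
    (orF (.and (.var a) (.var b)) (.and (.not (.var a)) (orF (.var c) (.var d)))).eval g
      = ((g a && g b) || (!(g a) && (g c || g d))) := by
  simp [eval_orF, BForm.eval]

/-- The iteration formulas of the simulating program. -/
def iterF (C : SelfFeeding k) (X : ℕ) : BForm :=
  if hX : X < k then .and (.var (cL C)) (.var (2 * k + (outG C ⟨X, hX⟩).val))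
  else if hX2 : X < 2 * k then
    orF (.and (.var (cL C)) (.var (2 * k + (outG C ⟨X - k, by omega⟩).val)))
      (.and (.not (.var (cL C))) (orF (.var (X - k)) (.var X)))
  else if hX3 : X < 2 * k + C.toCircuit.size then gateForm C ⟨X - 2 * k, by omega⟩
  else if X = 2 * k + C.toCircuit.size then .var (cL C)
  else .var (X - 1)

/-- The terminal values of the simulating program. -/
def termF (C : SelfFeeding k) (X : ℕ) : Bool :=
  if hX : X < k then C.init ⟨X, hX⟩
  else if X = 2 * k + C.toCircuit.size then true
  else false

/-- The embedding of `Fin k` into `ℕ`. -/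
def valEmb (k : ℕ) : Fin k ↪ ℕ := ⟨Fin.val, Fin.val_injective⟩

lemma cL_lt (C : SelfFeeding k) : cL C < NN C := by
  have h1 : pp C = C.toCircuit.depth + 2 := rfl
  unfold cL cv NN
  omega

lemma indexOf_lt (C : SelfFeeding k) {g : Fin C.toCircuit.size}
    (hl : C.toCircuit.label g = GateLabel.inp) : C.toCircuit.inputs.idxOf g < k := by
  have h1 := List.idxOf_lt_length_iff.2 ((C.inputs_spec g).2 hl)
  have h2 := C.in_len
  omega

lemma vars_gateForm (C : SelfFeeding k) (g : Fin C.toCircuit.size) :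
    (gateForm C g).vars ⊆ Finset.range (NN C) := by
  have h1 : pp C = C.toCircuit.depth + 2 := rfl
  have hNN : NN C = 2 * k + C.toCircuit.size + pp C := rfl
  intro x hx
  rw [Finset.mem_range]
  unfold gateForm at hx
  cases hl : C.toCircuit.label g <;> rw [hl] at hx
  · rw [vars_orF] at hx
    have him := indexOf_lt C hl
    rcases Finset.mem_union.1 hx with h | h <;>
      · simp only [BForm.vars, Finset.mem_singleton] at h
        omega
  · rw [vars_bigAnd, List.mem_toFinset, List.mem_map] at hx
    obtain ⟨j, _, rfl⟩ := hx
    have := j.isLt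
    omega
  · rw [show (BForm.not (bigAndN _)).vars = (bigAndN ((preds C.toCircuit g).map
      (fun j => 2 * k + j.val))).vars from rfl, vars_bigAndN, List.mem_toFinset,
      List.mem_map] at hx
    obtain ⟨j, _, rfl⟩ := hx
    have := j.isLt
    omega
  · rw [vars_bigAndN, List.mem_toFinset, List.mem_map] at hx
    obtain ⟨j, _, rfl⟩ := hx
    have := j.isLt
    omega

/-- The simulating BNL-program. -/
def prog (C : SelfFeeding k) : BNL where
  T := Finset.range (NN C)
  I := C.Ipos.map (valEmb k)
  hIT := by
    intro x hx
    rw [Finset.mem_map] at hx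
    obtain ⟨v, _, rfl⟩ := hx
    have h1 : pp C = C.toCircuit.depth + 2 := rfl
    have h2 : (valEmb k) v = v.val := rfl
    have h3 := v.isLt
    rw [Finset.mem_range, h2]
    unfold NN
    omega
  term := termF C
  iter := iterF C
  hiter := by
    intro X hX
    have h1 : pp C = C.toCircuit.depth + 2 := rfl
    have hcL := cL_lt C
    have hNN : NN C = 2 * k + C.toCircuit.size + pp C := rfl
    unfold iterF
    split
    · rename_i hXk
      intro x hx
      simp only [BForm.vars, Finset.mem_union, Finset.mem_singleton] at hx
      rw [Finset.mem_range]
      have := (outG C ⟨X, hXk⟩).isLt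
      rcases hx with rfl | rfl <;> omega
    · split
      · rename_i hXk hX2
        intro x hx
        simp only [vars_orF, BForm.vars, Finset.mem_union, Finset.mem_singleton] at hx
        rw [Finset.mem_range]
        rw [Finset.mem_range] at hX
        have := (outG C ⟨X - k, by omega⟩).isLt
        rcases hx with (rfl | rfl) | (rfl | (rfl | rfl)) <;> omega
      · split
        · exact vars_gateForm C _
        · split
          · intro x hx
            simp only [BForm.vars, Finset.mem_singleton] at hx
            subst hx
            rw [Finset.mem_range]
            omega
          · intro x hx
            simp only [BForm.vars, Finset.mem_singleton] at hx
            subst hx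
            rw [Finset.mem_range] at hX ⊢
            rename_i hXk hX2 hX3 hX4
            omega
  Pr := C.Ppos.map (valEmb k)
  hPr := by
    intro x hx
    rw [Finset.mem_map] at hx
    obtain ⟨v, _, rfl⟩ := hx
    have h1 : pp C = C.toCircuit.depth + 2 := rfl
    have h2 : (valEmb k) v = v.val := rfl
    have h3 := v.isLt
    rw [Finset.mem_range, h2]
    unfold NN
    omega
  At := C.Apos.map (valEmb k)
  hAt := by
    intro x hx
    rw [Finset.mem_map] at hx
    obtain ⟨v, _, rfl⟩ := hx
    have h1 : pp C = C.toCircuit.depth + 2 := rfl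
    have h2 : (valEmb k) v = v.val := rfl
    have h3 := v.isLt
    rw [Finset.mem_range, h2]
    unfold NN
    omega

lemma iterF_D (C : SelfFeeding k) (v : Fin k) :
    iterF C v.val = .and (.var (cL C)) (.var (2 * k + (outG C v).val)) := by
  unfold iterF
  rw [dif_pos v.isLt]

lemma iterF_S (C : SelfFeeding k) (v : Fin k) :
    iterF C (k + v.val) =
      orF (.and (.var (cL C)) (.var (2 * k + (outG C v).val)))
        (.and (.not (.var (cL C))) (orF (.var v.val) (.var (k + v.val)))) := by
  have hv := v.isLt
  unfold iterF
  rw [dif_neg (by omega), dif_pos (by omega)]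
  congr 2 <;> simp [Nat.add_sub_cancel_left]

lemma iterF_G (C : SelfFeeding k) (g : Fin C.toCircuit.size) :
    iterF C (2 * k + g.val) = gateForm C g := by
  have hg := g.isLt
  unfold iterF
  rw [dif_neg (by omega), dif_neg (by omega), dif_pos (by omega)]
  congr 1
  simp [Nat.add_sub_cancel_left]

lemma iterF_cv0 (C : SelfFeeding k) : iterF C (cv C 0) = .var (cL C) := by
  unfold iterF cv
  rw [dif_neg (by omega), dif_neg (by omega), dif_neg (by omega), if_pos (by omega)]

lemma iterF_cvi (C : SelfFeeding k) (i : ℕ) (hi : 1 ≤ i) :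
    iterF C (cv C i) = .var (cv C (i - 1)) := by
  unfold iterF cv
  rw [dif_neg (by omega), dif_neg (by omega), dif_neg (by omega), if_neg (by omega)]
  congr 1
  omega

end Construction

end SFBNL

namespace SFBNL

open CircuitAux

section Dynamics

variable {k : ℕ} (C : SelfFeeding k) (u : ℕ → Bool)

lemma conf_succ (t : ℕ) (X : ℕ) :
    (prog C).conf u (t + 1) X = (iterF C X).eval ((prog C).conf u t) := rfl

lemma conf_zero (X : ℕ) :
    (prog C).conf u 0 X = if X ∈ C.Ipos.map (valEmb k) then
      inputVal (C.Ipos.map (valEmb k)) u X else termF C X := rfl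

lemma clock (t : ℕ) : ∀ i, i < pp C →
    (prog C).conf u t (cv C i) = decide (t % pp C = i) := by
  have hp : pp C = C.toCircuit.depth + 2 := rfl
  induction t with
  | zero =>
    intro i hi
    have hni : cv C i ∉ C.Ipos.map (valEmb k) := by
      rw [Finset.mem_map]
      rintro ⟨v, _, hv⟩
      have h2 : (valEmb k) v = v.val := rfl
      have h3 := v.isLt
      rw [h2] at hv
      unfold cv at hv
      omega
    rw [conf_zero, if_neg hni]
    unfold termF cv
    rw [dif_neg (by omega)]
    by_cases h0 : i = 0
    · subst h0
      rw [if_pos (by omega), Nat.zero_mod]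
      rfl
    · rw [if_neg (by omega), Nat.zero_mod]
      symm
      rw [decide_eq_false_iff_not]
      omega
  | succ t ih =>
    intro i hi
    have hr : t % pp C < pp C := Nat.mod_lt _ (by omega)
    by_cases h0 : i = 0
    · subst h0
      have hstep : (prog C).conf u (t + 1) (cv C 0) = (prog C).conf u t (cL C) := by
        rw [conf_succ, iterF_cv0]
        rfl
      rw [hstep]
      unfold cL
      rw [ih (pp C - 1) (by omega), succ_mod (pp C) t (by omega)]
      by_cases h : t % pp C = pp C - 1
      · simp [h]
      · rw [if_neg h]
        simp only [h, decide_false]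
        symm
        rw [decide_eq_false_iff_not]
        omega
    · have hstep : (prog C).conf u (t + 1) (cv C i) = (prog C).conf u t (cv C (i - 1)) := by
        rw [conf_succ, iterF_cvi C i (by omega)]
        rfl
      rw [hstep, ih (i - 1) (by omega), succ_mod (pp C) t (by omega)]
      by_cases h : t % pp C = pp C - 1
      · rw [if_pos h]
        apply decide_eq_decide.mpr
        omega
      · rw [if_neg h]
        apply decide_eq_decide.mpr
        omega

theorem main (hk : 0 < k) : ∀ t : ℕ,
    (∀ v : Fin k, (prog C).conf u t v.val =
        if pp C ∣ t then C.conf u (t / pp C) v else false) ∧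
    (t ≠ 0 → ∀ v : Fin k, (prog C).conf u t (k + v.val) = C.conf u (t / pp C) v) ∧
    (∀ g : Fin C.toCircuit.size,
        pp C * ((t - 1) / pp C) + C.toCircuit.height g + 1 ≤ t →
        (prog C).conf u t (2 * k + g.val) =
          C.toCircuit.eval
            (fun m => if h : m < k then C.conf u ((t - 1) / pp C) ⟨m, h⟩ else false) g) := by
  have hp : pp C = C.toCircuit.depth + 2 := rfl
  have hp0 : 0 < pp C := by omega
  intro t
  induction t with
  | zero =>
    refine ⟨?_, fun h => absurd rfl h, ?_⟩
    · intro v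
      rw [if_pos (dvd_zero _), Nat.zero_div]
      rw [conf_zero]
      show _ = (if v ∈ C.Ipos then u ((C.Ipos.sort (· ≤ ·)).idxOf v) else C.init v)
      by_cases hv : v ∈ C.Ipos
      · rw [if_pos (show (v.val : ℕ) ∈ Finset.map (valEmb k) C.Ipos from Finset.mem_map_of_mem (valEmb k) hv), if_pos hv]
        unfold inputVal valEmb
        rw [sortMap, indexOfMap]
      · rw [if_neg ?_, if_neg hv]
        · unfold termF
          rw [dif_pos v.isLt]
        · rw [Finset.mem_map]
          rintro ⟨w, hw, hwv⟩
          have hwv' : w = v := Fin.val_injective hwv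
          subst hwv'
          exact hv hw
    · intro g hcond
      rw [Nat.zero_sub, Nat.zero_div, Nat.mul_zero] at hcond
      omega
  | succ t ih =>
    obtain ⟨ihD, ihS, ihG⟩ := ih
    have hr : t % pp C < pp C := Nat.mod_lt _ hp0
    have hqr := Nat.div_add_mod t (pp C)
    have hDS : ∀ v : Fin k, ((prog C).conf u t v.val || (prog C).conf u t (k + v.val))
        = C.conf u (t / pp C) v := by
      intro v
      rcases Nat.eq_zero_or_pos t with rfl | ht
      · have hS0 : (prog C).conf u 0 (k + v.val) = false := by
          rw [conf_zero]
          have hv := v.isLt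
          rw [if_neg ?_]
          · unfold termF
            rw [dif_neg (by omega), if_neg (by omega)]
          · rw [Finset.mem_map]
            rintro ⟨w, _, hwv⟩
            have hwv' : w.val = k + v.val := hwv
            have := w.isLt
            omega
        rw [hS0, ihD v, if_pos (dvd_zero _)]
        simp
      · rw [ihD v, ihS (by omega) v]
        by_cases hd : pp C ∣ t
        · rw [if_pos hd]
          simp
        · rw [if_neg hd]
          simp
    have hfire : (prog C).conf u t (cL C) = decide (t % pp C = pp C - 1) := by
      unfold cL
      exact clock C u t (pp C - 1) (by omega)
    have hout : t % pp C = pp C - 1 → ∀ v : Fin k,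
        (prog C).conf u t (2 * k + (outG C v).val) = C.conf u (t / pp C + 1) v := by
      intro hmod v
      have ht1 : pp C * (t / pp C) + 1 ≤ t := by omega
      have h1 : (t - 1) / pp C = t / pp C := pred_div_eq_of_ge hp0 ht1
      have hle := height_le_depth C.toCircuit (outG_mem C v)
      have h2 := ihG (outG C v) (by rw [h1]; omega)
      rw [h2, h1]
      show _ = C.toCircuit.eval _ (C.toCircuit.outputs.get (Fin.cast C.out_len.symm v))
      rfl
    refine ⟨?_, ?_, ?_⟩
    · -- input/display variables
      intro v
      rw [conf_succ, iterF_D]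
      show ((prog C).conf u t (cL C) && (prog C).conf u t (2 * k + (outG C v).val)) = _
      rw [hfire]
      by_cases hmod : t % pp C = pp C - 1
      · rw [hout hmod v]
        have hdvd : pp C ∣ (t + 1) := (dvd_succ_iff hp0).2 hmod
        rw [if_pos hdvd, succ_div_of_mod_eq hp0 hmod]
        simp [hmod]
      · have hdvd : ¬ pp C ∣ (t + 1) := fun h => hmod ((dvd_succ_iff hp0).1 h)
        rw [if_neg hdvd]
        simp [hmod]
    · -- state variables
      intro _ v
      rw [conf_succ, iterF_S, eval_S_form, hfire, hDS v]
      by_cases hmod : t % pp C = pp C - 1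
      · rw [hout hmod v, succ_div_of_mod_eq hp0 hmod]
        simp [hmod]
      · rw [succ_div_of_mod_ne hp0 hmod]
        simp [hmod]
    · -- gate variables
      intro g hcond
      simp only [Nat.add_sub_cancel] at hcond ⊢
      rw [conf_succ, iterF_G]
      have key : ∀ j : Fin C.toCircuit.size, C.toCircuit.edge j g = true →
          (prog C).conf u t (2 * k + j.val) =
            C.toCircuit.eval
              (fun m => if h : m < k then C.conf u (t / pp C) ⟨m, h⟩ else false) j := by
        intro j hj
        have hlt := height_lt_of_edge C.toCircuit hj
        have ht1 : pp C * (t / pp C) + 1 ≤ t := by omega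
        have h1 : (t - 1) / pp C = t / pp C := pred_div_eq_of_ge hp0 ht1
        have h2 := ihG j (by rw [h1]; omega)
        rw [h2, h1]
      have hBA : (bigAnd ((preds C.toCircuit g).map (fun j => 2 * k + j.val))).eval
            ((prog C).conf u t) = true ↔
          ∀ j, C.toCircuit.edge j g = true →
            (prog C).conf u t (2 * k + j.val) = true := by
        rw [eval_bigAnd]
        constructor
        · intro h j hj
          exact h _ (List.mem_map.2 ⟨j, (mem_preds _).2 hj, rfl⟩)
        · intro h x hx
          obtain ⟨j, hj, rfl⟩ := List.mem_map.1 hx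
          exact h j ((mem_preds _).1 hj)
      have hBN : (bigAndN ((preds C.toCircuit g).map (fun j => 2 * k + j.val))).eval
            ((prog C).conf u t) = true ↔
          ∀ j, C.toCircuit.edge j g = true →
            (prog C).conf u t (2 * k + j.val) = false := by
        rw [eval_bigAndN]
        constructor
        · intro h j hj
          exact h _ (List.mem_map.2 ⟨j, (mem_preds _).2 hj, rfl⟩)
        · intro h x hx
          obtain ⟨j, hj, rfl⟩ := List.mem_map.1 hx
          exact h j ((mem_preds _).1 hj)
      cases hl : C.toCircuit.label g
      · -- input gate
        have hm : C.toCircuit.inputs.idxOf g < k := indexOf_lt C hl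
        rw [gateForm_inp C hl, eval_inp _ _ hl, eval_orF]
        show ((prog C).conf u t (C.toCircuit.inputs.idxOf g) ||
          (prog C).conf u t (k + C.toCircuit.inputs.idxOf g)) = _
        rw [dif_pos hm]
        exact hDS ⟨_, hm⟩
      · -- and gate
        rw [gateForm_and C hl, eval_and _ _ hl, Bool.eq_iff_iff, decide_eq_true_eq, hBA]
        constructor
        · intro h j hj
          rw [← key j hj]
          exact h j hj
        · intro h j hj
          rw [key j hj]
          exact h j hj
      · -- or gate
        rw [gateForm_or C hl, eval_or _ _ hl, Bool.eq_iff_iff, decide_eq_true_eq]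
        show (!(bigAndN _).eval _) = true ↔ _
        rw [Bool.not_eq_true']
        constructor
        · intro h
          by_contra hno
          push_neg at hno
          have htrue : (bigAndN ((preds C.toCircuit g).map (fun j => 2 * k + j.val))).eval
              ((prog C).conf u t) = true := by
            apply hBN.2
            intro j hj
            rw [key j hj]
            exact Bool.eq_false_iff.2 (hno j hj)
          rw [htrue] at h
          exact Bool.noConfusion h
        · rintro ⟨j, hj, hv⟩
          apply Bool.eq_false_iff.2
          intro htrue
          have := hBN.1 htrue j hj
          rw [key j hj, hv] at this
          exact Bool.noConfusion this
      · -- not gate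
        rw [gateForm_not C hl, eval_not _ _ hl, Bool.eq_iff_iff, decide_eq_true_eq, hBN]
        constructor
        · intro h j hj
          rw [← key j hj]
          exact h j hj
        · intro h j hj
          rw [key j hj]
          exact h j hj

lemma attn_iff (hk : 0 < k) (t : ℕ) :
    (prog C).attn u t ↔ (pp C ∣ t ∧ C.attn u (t / pp C)) := by
  constructor
  · rintro ⟨X, hX, hval⟩
    rw [show (prog C).At = C.Apos.map (valEmb k) from rfl, Finset.mem_map] at hX
    obtain ⟨v, hv, rfl⟩ := hX
    have he : (valEmb k) v = v.val := rfl
    rw [he, (main C u hk t).1 v] at hval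
    by_cases hd : pp C ∣ t
    · rw [if_pos hd] at hval
      exact ⟨hd, v, hv, hval⟩
    · rw [if_neg hd] at hval
      exact Bool.noConfusion hval
  · rintro ⟨hd, v, hv, hval⟩
    refine ⟨v.val, Finset.mem_map_of_mem (valEmb k) hv, ?_⟩
    rw [(main C u hk t).1 v, if_pos hd]
    exact hval

lemma out_eq (hk : 0 < k) (t : ℕ) (hd : pp C ∣ t) :
    (prog C).out u t = C.out u (t / pp C) := by
  show ((prog C).Pr.sort (· ≤ ·)).map ((prog C).conf u t)
    = (C.Ppos.sort (· ≤ ·)).map (C.conf u (t / pp C))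
  rw [show (prog C).Pr = C.Ppos.map ⟨Fin.val, Fin.val_injective⟩ from rfl, sortMap,
    List.map_map]
  apply List.map_congr_left
  intro v _
  show (prog C).conf u t v.val = _
  rw [(main C u hk t).1 v, if_pos hd]

end Dynamics

end SFBNL

namespace SFBNL

open CircuitAux

section Wrap

variable {k : ℕ} (C : SelfFeeding k)

lemma prog_equiv (hk : 0 < k) (D : ℕ) (hD : pp C ≤ D) :
    EquivWithDelay (prog C).toM C.toM D := by
  have hp : pp C = C.toCircuit.depth + 2 := rfl
  have hp0 : 0 < pp C := by omega
  refine ⟨Finset.card_map _, Finset.card_map _, ?_⟩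
  intro u
  refine ⟨{ toFun := fun t => ⟨t.val / pp C, ((attn_iff C u hk t.val).1 t.2).2⟩,
            invFun := fun s => ⟨pp C * s.val, (attn_iff C u hk _).2
              ⟨dvd_mul_right _ _, by rw [Nat.mul_div_cancel_left _ hp0]; exact s.2⟩⟩,
            left_inv := ?_, right_inv := ?_, map_rel_iff' := ?_ }, ?_, ?_⟩
  · intro t
    apply Subtype.ext
    exact Nat.mul_div_cancel' ((attn_iff C u hk t.val).1 t.2).1
  · intro s
    apply Subtype.ext
    exact Nat.mul_div_cancel_left _ hp0
  · intro a b
    show a.val / pp C ≤ b.val / pp C ↔ a ≤ b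
    rw [← Subtype.coe_le_coe]
    obtain ⟨x, hx⟩ := ((attn_iff C u hk a.val).1 a.2).1
    obtain ⟨y, hy⟩ := ((attn_iff C u hk b.val).1 b.2).1
    show _ ↔ a.val ≤ b.val
    rw [hx, hy, Nat.mul_div_cancel_left _ hp0, Nat.mul_div_cancel_left _ hp0]
    constructor
    · intro h
      exact Nat.mul_le_mul_left _ h
    · intro h
      exact Nat.le_of_mul_le_mul_left h hp0
  · intro t
    exact out_eq C u hk t.val ((attn_iff C u hk t.val).1 t.2).1
  · intro t
    refine ⟨Nat.div_le_self _ _, ?_⟩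
    have hdvd := ((attn_iff C u hk t.val).1 t.2).1
    calc t.val = pp C * (t.val / pp C) := (Nat.mul_div_cancel' hdvd).symm
    _ ≤ D * (t.val / pp C) := Nat.mul_le_mul_right _ hD

lemma size_iterF_D' (X : ℕ) (hX : X < k) : (iterF C X).size = 3 := by
  have h' : iterF C X = .and (.var (cL C)) (.var (2 * k + (outG C ⟨X, hX⟩).val)) :=
    iterF_D C ⟨X, hX⟩
  rw [h']
  rfl

lemma size_iterF_S' (X : ℕ) (hX1 : k ≤ X) (hX2 : X < 2 * k) : (iterF C X).size = 16 := by
  have hv : X - k < k := by omega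
  have h' : iterF C X =
      orF (.and (.var (cL C)) (.var (2 * k + (outG C ⟨X - k, hv⟩).val)))
        (.and (.not (.var (cL C))) (orF (.var (X - k)) (.var X))) := by
    have h2 := iterF_S C ⟨X - k, hv⟩
    rw [show k + ((⟨X - k, hv⟩ : Fin k) : ℕ) = X from by
      show k + (X - k) = X
      omega] at h2
    exact h2
  rw [h']
  rfl

lemma size_iterF_G' (g : Fin C.toCircuit.size) :
    (iterF C (2 * k + g.val)).size ≤ 3 * indeg C.toCircuit g + 6 := by
  rw [iterF_G]
  cases hl : C.toCircuit.label g
  · rw [gateForm_inp C hl]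
    show 6 ≤ _
    omega
  · rw [gateForm_and C hl, size_bigAnd, List.length_map, length_preds]
    omega
  · rw [gateForm_or C hl]
    show (bigAndN _).size + 1 ≤ _
    rw [size_bigAndN, List.length_map, length_preds]
    omega
  · rw [gateForm_not C hl, size_bigAndN, List.length_map, length_preds]
    omega

lemma size_iterF_C' (X : ℕ) (hX1 : 2 * k + C.toCircuit.size ≤ X) (hX2 : X < NN C) :
    (iterF C X).size = 1 := by
  have hp : pp C = C.toCircuit.depth + 2 := rfl
  have hNN : NN C = 2 * k + C.toCircuit.size + pp C := rfl
  have hi : X - (2 * k + C.toCircuit.size) < pp C := by omega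
  have hcv : cv C (X - (2 * k + C.toCircuit.size)) = X := by
    unfold cv
    omega
  by_cases h0 : X = 2 * k + C.toCircuit.size
  · have h' : iterF C X = .var (cL C) := by
      have := iterF_cv0 C
      rwa [show cv C 0 = X from by unfold cv; omega] at this
    rw [h']
    rfl
  · have h' : iterF C X = .var (cv C (X - (2 * k + C.toCircuit.size) - 1)) := by
      have := iterF_cvi C (X - (2 * k + C.toCircuit.size)) (by omega)
      rwa [hcv] at this
    rw [h']
    rfl

lemma prog_size_le (hk : 0 < k) :
    (prog C).size ≤ 34 * (C.toCircuit.size + C.toCircuit.edgeCount) := by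
  have hp : pp C = C.toCircuit.depth + 2 := rfl
  have hNN : NN C = 2 * k + C.toCircuit.size + pp C := rfl
  have hnpos : 0 < C.toCircuit.size := by
    have h1 := C.in_len
    rcases hne : C.toCircuit.inputs with _ | ⟨g, l⟩
    · rw [hne] at h1
      simp at h1
      omega
    · exact g.pos
  have hkn : k ≤ C.toCircuit.size := by
    have h1 := C.in_len
    have h2 : C.toCircuit.inputs.length ≤ C.toCircuit.size := by
      have h3 := C.inputs_nodup.length_le_card
      rwa [Fintype.card_fin] at h3
    omega
  have hd : C.toCircuit.depth ≤ C.toCircuit.size := depth_le_size C.toCircuit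
  have hcard : ((Finset.range (NN C)) \ (C.Ipos.map (valEmb k))).card ≤ NN C := by
    apply le_trans (Finset.card_le_card Finset.sdiff_subset)
    rw [Finset.card_range]
  have hsplit : ∑ X ∈ Finset.range (NN C), (iterF C X).size =
      (∑ X ∈ Finset.Ico 0 k, (iterF C X).size) +
      (∑ X ∈ Finset.Ico k (2 * k), (iterF C X).size) +
      (∑ X ∈ Finset.Ico (2 * k) (2 * k + C.toCircuit.size), (iterF C X).size) +
      (∑ X ∈ Finset.Ico (2 * k + C.toCircuit.size) (NN C), (iterF C X).size) := by
    rw [Finset.range_eq_Ico]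
    rw [Finset.sum_Ico_consecutive _ (by omega : 0 ≤ k) (by omega : k ≤ 2 * k)]
    rw [Finset.sum_Ico_consecutive _ (by omega : 0 ≤ 2 * k)
      (by omega : 2 * k ≤ 2 * k + C.toCircuit.size)]
    rw [Finset.sum_Ico_consecutive _ (by omega : 0 ≤ 2 * k + C.toCircuit.size)
      (by omega : 2 * k + C.toCircuit.size ≤ NN C)]
  have h1 : ∑ X ∈ Finset.Ico 0 k, (iterF C X).size = 3 * k := by
    rw [Finset.sum_congr rfl (fun X hX => size_iterF_D' C X
      (by rw [Finset.mem_Ico] at hX; omega))]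
    rw [Finset.sum_const, Nat.card_Ico, smul_eq_mul]
    omega
  have h2 : ∑ X ∈ Finset.Ico k (2 * k), (iterF C X).size = 16 * k := by
    rw [Finset.sum_congr rfl (fun X hX => size_iterF_S' C X
      (by rw [Finset.mem_Ico] at hX; omega) (by rw [Finset.mem_Ico] at hX; omega))]
    rw [Finset.sum_const, Nat.card_Ico, smul_eq_mul]
    omega
  have h3 : ∑ X ∈ Finset.Ico (2 * k) (2 * k + C.toCircuit.size), (iterF C X).size ≤
      3 * C.toCircuit.edgeCount + 6 * C.toCircuit.size := by
    rw [Finset.sum_Ico_eq_sum_range]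
    simp only [Nat.add_sub_cancel_left]
    rw [← Fin.sum_univ_eq_sum_range (fun i => (iterF C (2 * k + i)).size) C.toCircuit.size]
    calc ∑ g : Fin C.toCircuit.size, (iterF C (2 * k + g.val)).size
        ≤ ∑ g : Fin C.toCircuit.size, (3 * indeg C.toCircuit g + 6) :=
          Finset.sum_le_sum (fun g _ => size_iterF_G' C g)
    _ = 3 * C.toCircuit.edgeCount + 6 * C.toCircuit.size := by
        rw [Finset.sum_add_distrib, ← Finset.mul_sum, ← edgeCount_eq, Finset.sum_const,
          Finset.card_univ, Fintype.card_fin, smul_eq_mul]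
        omega
  have h4 : ∑ X ∈ Finset.Ico (2 * k + C.toCircuit.size) (NN C), (iterF C X).size = pp C := by
    rw [Finset.sum_congr rfl (fun X hX => size_iterF_C' C X
      (by rw [Finset.mem_Ico] at hX; omega) (by rw [Finset.mem_Ico] at hX; omega))]
    rw [Finset.sum_const, Nat.card_Ico, smul_eq_mul]
    omega
  have htotal : (prog C).size = ((Finset.range (NN C)) \ (C.Ipos.map (valEmb k))).card +
      ∑ X ∈ Finset.range (NN C), (iterF C X).size := rfl
  rw [htotal, hsplit, h1, h2, h4]
  omega

lemma edge_le_two_size (hb : C.toCircuit.BoundedFanIn) :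
    C.toCircuit.edgeCount ≤ 2 * C.toCircuit.size := by
  rw [edgeCount_eq]
  calc ∑ g : Fin C.toCircuit.size, indeg C.toCircuit g
      ≤ ∑ _g : Fin C.toCircuit.size, 2 :=
        Finset.sum_le_sum (fun g _ => indeg_le_two_of_bfi C.toCircuit hb g)
  _ = 2 * C.toCircuit.size := by
      rw [Finset.sum_const, Finset.card_univ, Fintype.card_fin, smul_eq_mul]
      omega

end Wrap

end SFBNL

namespace SFBNL

/-- The trivial (empty) BNL-program. -/
def trivProg : BNL where
  T := ∅
  I := ∅
  hIT := Finset.empty_subset _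
  term := fun _ => false
  iter := fun _ => .tru
  hiter := fun X hX => absurd hX (Finset.notMem_empty X)
  Pr := ∅
  hPr := Finset.empty_subset _
  At := ∅
  hAt := Finset.empty_subset _

lemma trivProg_size : trivProg.size = 0 := by
  show (∅ \ ∅ : Finset ℕ).card + ∑ X ∈ (∅ : Finset ℕ), (BForm.tru).size = 0
  simp

lemma triv_equiv (C : SelfFeeding 0) (D : ℕ) : EquivWithDelay trivProg.toM C.toM D := by
  have hI : C.Ipos = ∅ := Finset.eq_empty_of_isEmpty _
  have hP : C.Ppos = ∅ := Finset.eq_empty_of_isEmpty _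
  refine ⟨?_, ?_, ?_⟩
  · show (∅ : Finset ℕ).card = C.Ipos.card
    rw [hI]
    rfl
  · show (∅ : Finset ℕ).card = C.Ppos.card
    rw [hP]
    rfl
  · intro u
    haveI h1 : IsEmpty (Machine.Rounds (BNL.toM trivProg) u) := ⟨fun t => by
      obtain ⟨X, hX, _⟩ := t.2
      exact Finset.notMem_empty X hX⟩
    haveI h2 : IsEmpty (Machine.Rounds (SelfFeeding.toM C) u) := ⟨fun s => by
      obtain ⟨v, _, _⟩ := s.2
      exact isEmptyElim v⟩
    refine ⟨{ toEquiv := Equiv.equivOfIsEmpty _ _, map_rel_iff' := fun {a b} => isEmptyElim a },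
      fun t => isEmptyElim t, fun t => isEmptyElim t⟩

end SFBNL

/-- Every self-feeding circuit of size `n`, depth `d` and `m` edges has an
asynchronously equivalent BNL-program of size at most `C·(n+m)` and computation delay at
most `C·(d+1)`; if the circuit has bounded fan-in, the program can be taken of size at most
`C·n`. -/
theorem selfFeeding_to_bnl :
    ∃ C : ℕ, ∀ (k : ℕ) (Cc : SelfFeeding k),
      (∃ Λ : BNL, Λ.size ≤ C * (Cc.toCircuit.size + Cc.toCircuit.edgeCount) ∧
        EquivWithDelay Λ.toM Cc.toM (C * (Cc.toCircuit.depth + 1))) ∧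
      (Cc.toCircuit.BoundedFanIn → ∃ Λ : BNL, Λ.size ≤ C * Cc.toCircuit.size ∧
        EquivWithDelay Λ.toM Cc.toM (C * (Cc.toCircuit.depth + 1))) := by
  refine ⟨102, fun k Cc => ?_⟩
  rcases Nat.eq_zero_or_pos k with rfl | hk
  · constructor
    · exact ⟨SFBNL.trivProg, by rw [SFBNL.trivProg_size]; exact Nat.zero_le _,
        SFBNL.triv_equiv Cc _⟩
    · exact fun _ => ⟨SFBNL.trivProg, by rw [SFBNL.trivProg_size]; exact Nat.zero_le _,
        SFBNL.triv_equiv Cc _⟩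
  · have hp : SFBNL.pp Cc = Cc.toCircuit.depth + 2 := rfl
    have hD : SFBNL.pp Cc ≤ 102 * (Cc.toCircuit.depth + 1) := by omega
    have h1 := SFBNL.prog_size_le Cc hk
    constructor
    · refine ⟨SFBNL.prog Cc, ?_, SFBNL.prog_equiv Cc hk _ hD⟩
      omega
    · intro hb
      refine ⟨SFBNL.prog Cc, ?_, SFBNL.prog_equiv Cc hk _ hD⟩
      have h2 := SFBNL.edge_le_two_size Cc hb
      omega
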